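/- Define h : ℝ_{>0} → ℝ by 1/h(T) = 1 − 2T/3 + 4 ∑_{m=1}^{∞} max(0, 1 − m/T)^2. Then the unique global maximum of h on (0, ∞) is attained at T_b, the middle root of x^3 − 12x + 12, and h(T_b) is the largest root of 7x^3 − 33x^2 + 33x − 3. -/

import Mathlib

lemma sum_sq_formula (T : ℝ) (hT : T ≠ 0) (n : ℕ) :
    ∑ m ∈ Finset.range n, (1 - ((m:ℝ)+1)/T)^2
      = n - n*(n+1)/T + n*(n+1)*(2*n+1)/(6*T^2) := by
  induction n with
  | zero => simp
  | succ k ih =>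
    rw [Finset.sum_range_succ, ih]
    push_cast
    field_simp
    ring

lemma tsum_eval (T : ℝ) (hT : 0 < T) (n : ℕ) (hnT : (n:ℝ) ≤ T) (hTn : T ≤ (n:ℝ)+1) :
    ∑' m : ℕ, (max 0 (1 - ((m:ℝ)+1)/T))^2
      = n - n*(n+1)/T + n*(n+1)*(2*n+1)/(6*T^2) := by
  rw [tsum_eq_sum (s := Finset.range n) (f := fun m : ℕ => (max 0 (1 - ((m:ℝ)+1)/T))^2) ?_]
  · refine (Finset.sum_congr rfl ?_).trans (sum_sq_formula T hT.ne' n)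
    intro m hm
    have hm' : ((m:ℝ)+1) ≤ n := by
      have := Finset.mem_range.mp hm
      exact_mod_cast Nat.succ_le_of_lt this
    have h0 : 0 ≤ 1 - ((m:ℝ)+1)/T := by
      have : ((m:ℝ)+1)/T ≤ 1 := by
        rw [div_le_one hT]; linarith
      linarith
    rw [max_eq_right h0]
  · intro m hm
    have hm' : (n:ℝ) ≤ m := by
      have := Finset.mem_range.not.mp hm
      exact_mod_cast Nat.le_of_not_lt this
    have h0 : 1 - ((m:ℝ)+1)/T ≤ 0 := by
      have h1 : 1 ≤ ((m:ℝ)+1)/T := by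
        rw [le_div_iff₀ hT]; linarith
      linarith
    rw [max_eq_left h0]
    norm_num

lemma loc (t : ℝ) (ht : t^3 - 12*t + 12 = 0) :
    (-4 < t ∧ t < -3.8) ∨ (1 < t ∧ t < 1.2) ∨ (2.7 < t ∧ t < 2.9) := by
  have h1 : -4 < t := by nlinarith [sq_nonneg (t+4), sq_nonneg t]
  have h2 : t < 2.9 := by nlinarith [sq_nonneg (t-2.9), sq_nonneg t]
  have h3 : ¬ (-3.8 ≤ t ∧ t ≤ 1) := by
    rintro ⟨ha, hb⟩
    nlinarith [sq_nonneg (t+2), mul_nonneg (by linarith : (0:ℝ) ≤ t + 3.8) (by linarith : (0:ℝ) ≤ 1 - t), sq_nonneg (t-1), sq_nonneg (t+3.8)]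
  have h4 : ¬ (1.2 ≤ t ∧ t ≤ 2.7) := by
    rintro ⟨ha, hb⟩
    nlinarith [sq_nonneg (t-2), mul_nonneg (by linarith : (0:ℝ) ≤ t - 1.2) (by linarith : (0:ℝ) ≤ 2.7 - t), sq_nonneg (t-1.2), sq_nonneg (t-2.7)]
  by_cases c1 : t < -3.8
  · exact Or.inl ⟨h1, c1⟩
  · by_cases c2 : t < 1.2
    · refine Or.inr (Or.inl ⟨?_, c2⟩)
      by_contra hle
      exact h3 ⟨by linarith, by linarith⟩
    · refine Or.inr (Or.inr ⟨?_, h2⟩)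
      by_contra hle
      exact h4 ⟨by linarith, by linarith⟩

lemma root_bounds (Tb x y : ℝ) (hroot : Tb^3-12*Tb+12=0) (hx : x^3-12*x+12=0)
    (hy : y^3-12*y+12=0) (hxT : x < Tb) (hTy : Tb < y) :
    1.11 < Tb ∧ Tb < 1.12 := by
  have lT := loc Tb hroot
  have lx := loc x hx
  have ly := loc y hy
  have hmidT : 1 < Tb ∧ Tb < 1.2 := by
    rcases lT with ⟨h1, h2⟩ | h | ⟨h1, h2⟩
    · exfalso
      rcases lx with ⟨g1, g2⟩ | ⟨g1, g2⟩ | ⟨g1, g2⟩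
      · have key : (Tb - x)*(x^2 + x*Tb + Tb^2 - 12) = 0 := by linear_combination hroot - hx
        have p1 : 0 < Tb - x := by linarith
        have p2 : 0 < x^2 + x*Tb + Tb^2 - 12 := by nlinarith
        nlinarith [mul_pos p1 p2]
      · linarith
      · linarith
    · exact h
    · exfalso
      rcases ly with ⟨g1, g2⟩ | ⟨g1, g2⟩ | ⟨g1, g2⟩
      · linarith
      · linarith
      · have key : (y - Tb)*(y^2 + y*Tb + Tb^2 - 12) = 0 := by linear_combination hy - hroot
        have p1 : 0 < y - Tb := by linarith
        have p2 : 0 < y^2 + y*Tb + Tb^2 - 12 := by nlinarith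
        nlinarith [mul_pos p1 p2]
  obtain ⟨hm1, hm2⟩ := hmidT
  constructor
  · by_contra hle
    push_neg at hle
    nlinarith [mul_nonneg (by linarith : (0:ℝ) ≤ Tb - 1) (by linarith : (0:ℝ) ≤ 1.11 - Tb), sq_nonneg (Tb - 1.11), sq_nonneg (Tb-1)]
  · by_contra hle
    push_neg at hle
    nlinarith [mul_nonneg (by linarith : (0:ℝ) ≤ Tb - 1.12) (by linarith : (0:ℝ) ≤ 1.2 - Tb), sq_nonneg (Tb - 1.12), sq_nonneg (Tb-1.2)]

set_option maxHeartbeats 1000000 in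
theorem h_max_at_middle_root (h : ℝ → ℝ)
    (hh : ∀ T : ℝ, 0 < T →
      1 / h T = 1 - 2 * T / 3 + 4 * ∑' m : ℕ, (max 0 (1 - ((m : ℝ) + 1) / T)) ^ 2)
    (Tb : ℝ) (hroot : Tb ^ 3 - 12 * Tb + 12 = 0)
    (hmid : ∃ x y : ℝ, x ^ 3 - 12 * x + 12 = 0 ∧ y ^ 3 - 12 * y + 12 = 0 ∧
      x < Tb ∧ Tb < y) :
    (∀ T : ℝ, 0 < T → T ≠ Tb → h T < h Tb) ∧
      (7 * (h Tb) ^ 3 - 33 * (h Tb) ^ 2 + 33 * (h Tb) - 3 = 0 ∧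
        ∀ y : ℝ, 7 * y ^ 3 - 33 * y ^ 2 + 33 * y - 3 = 0 → y ≤ h Tb) := by
  obtain ⟨x, y, hx, hy, hxT, hTy⟩ := hmid
  obtain ⟨hTb1, hTb2⟩ := root_bounds Tb x y hroot hx hy hxT hTy
  have hTb0 : 0 < Tb := by linarith
  have hTbne : Tb ≠ 0 := hTb0.ne'
  -- value at Tb
  obtain ⟨c, hc_def⟩ : ∃ c : ℝ, c = (15*Tb^2 - 2*Tb^3 - 24*Tb + 12)/(3*Tb^2) := ⟨_, rfl⟩
  have hcTb : 1 / h Tb = c := by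
    rw [hh Tb hTb0, tsum_eval Tb hTb0 1 (by push_cast; linarith) (by push_cast; linarith)]
    push_cast
    rw [hc_def]
    field_simp
    ring
  have hc_pos : 0 < c := by
    rw [hc_def]
    apply div_pos _ (by positivity)
    nlinarith [mul_pos (by linarith : (0:ℝ) < Tb - 1.11) (by linarith : (0:ℝ) < 1.12 - Tb)]
  have hc3 : c < 1/3 := by
    rw [hc_def, div_lt_div_iff₀ (by positivity) (by norm_num)]
    nlinarith [mul_pos (by linarith : (0:ℝ) < Tb - 1.11) (by linarith : (0:ℝ) < 1.12 - Tb)]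
  -- the key: for all T > 0, T ≠ Tb, c < 1 / h T
  have main : ∀ T : ℝ, 0 < T → T ≠ Tb → c < 1 / h T := by
    intro T hT hne
    rcases le_or_gt T 1 with hT1 | hT1
    · -- regime (0,1]
      have hgT : 1 / h T = 1 - 2*T/3 := by
        rw [hh T hT, tsum_eval T hT 0 (by push_cast; linarith) (by push_cast; linarith)]
        push_cast
        ring
      rw [hgT]
      have : (1:ℝ)/3 ≤ 1 - 2*T/3 := by linarith
      linarith
    · rcases le_or_gt T 2 with hT2 | hT2
      · -- regime (1,2]
        have hgT : 1 / h T = (15*T^2 - 2*T^3 - 24*T + 12)/(3*T^2) := by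
          rw [hh T hT, tsum_eval T hT 1 (by push_cast; linarith) (by push_cast; linarith)]
          push_cast
          field_simp
          ring
        rw [hgT, hc_def, div_lt_div_iff₀ (by positivity) (by positivity)]
        have hsq : 0 < (T - Tb)^2 := pow_two_pos_of_ne_zero (sub_ne_zero.mpr hne)
        have h6 : 0 < 6 - T*Tb^2 := by nlinarith
        have hnum : (15*T^2-2*T^3-24*T+12)*Tb^2 - (15*Tb^2-2*Tb^3-24*Tb+12)*T^2
            = 2*(T-Tb)^2*(6-T*Tb^2) := by linear_combination (2*T*Tb - 2*T^2) * hroot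
        nlinarith [mul_pos hsq h6]
      · -- regime (2, ∞)
        set n : ℕ := ⌊T⌋₊ with hn_def
        have hnT : (n:ℝ) ≤ T := Nat.floor_le hT.le
        have hTn : T < (n:ℝ)+1 := Nat.lt_floor_add_one T
        have hN2 : (2:ℝ) ≤ (n:ℝ) := by
          have : 2 ≤ n := Nat.le_floor (by exact_mod_cast hT2.le)
          exact_mod_cast this
        have hgT : 1 / h T = 1 - 2*T/3 + 4*((n:ℝ) - (n:ℝ)*((n:ℝ)+1)/T + (n:ℝ)*((n:ℝ)+1)*(2*(n:ℝ)+1)/(6*T^2)) := by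
          rw [hh T hT, tsum_eval T hT n hnT hTn.le]
        have hhalf : (1:ℝ)/2 < 1 / h T := by
          rw [hgT]
          have hexp : 1 - 2*T/3 + 4*((n:ℝ) - (n:ℝ)*((n:ℝ)+1)/T + (n:ℝ)*((n:ℝ)+1)*(2*(n:ℝ)+1)/(6*T^2))
              = (6*T^2 + 24*(n:ℝ)*T^2 - 4*T^3 - 24*(n:ℝ)*((n:ℝ)+1)*T + 4*(n:ℝ)*((n:ℝ)+1)*(2*(n:ℝ)+1))/(6*T^2) := by
            field_simp
            ring
          rw [hexp, div_lt_div_iff₀ (by norm_num) (by positivity)]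
          have hs0 : (0:ℝ) ≤ T - (n:ℝ) := by linarith
          have hs1 : T - (n:ℝ) ≤ 1 := by linarith
          have p1 : (0:ℝ) < 4*(n:ℝ)^3 - 9*(n:ℝ)^2 + 4*(n:ℝ) := by
            nlinarith [mul_nonneg (by linarith : (0:ℝ) ≤ (n:ℝ)) (sq_nonneg ((n:ℝ)-2)), sq_nonneg ((n:ℝ)-2)]
          have p2 : (0:ℝ) ≤ (12*(n:ℝ)^2 - 18*(n:ℝ))*(T-(n:ℝ)) := by
            apply mul_nonneg _ hs0
            nlinarith
          have p3' : (0:ℝ) ≤ (T-(n:ℝ))^2 * (12*(n:ℝ)+3-4*(T-(n:ℝ))) :=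
            mul_nonneg (sq_nonneg _) (by linarith)
          have p3 : (0:ℝ) ≤ (12*(n:ℝ)+3)*(T-(n:ℝ))^2 - 4*(T-(n:ℝ))^3 := by nlinarith [p3']
          have e : -4*T^3 + (3+24*(n:ℝ))*T^2 - 24*(n:ℝ)*((n:ℝ)+1)*T + 4*(n:ℝ)*((n:ℝ)+1)*(2*(n:ℝ)+1)
              = (4*(n:ℝ)^3-9*(n:ℝ)^2+4*(n:ℝ)) + (12*(n:ℝ)^2-18*(n:ℝ))*(T-(n:ℝ))
                + (12*(n:ℝ)+3)*(T-(n:ℝ))^2 - 4*(T-(n:ℝ))^3 := by ring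
          nlinarith [e, p1, p2, p3]
        linarith
  have hcne : c ≠ 0 := hc_pos.ne'
  have hhTb : h Tb = 1/c := by rw [← hcTb, one_div_one_div]
  have ha3 : 3 < h Tb := by
    rw [hhTb, lt_div_iff₀ hc_pos]; linarith
  have hu : c * (3*Tb^2) = 15*Tb^2 - 2*Tb^3 - 24*Tb + 12 := by
    rw [hc_def]
    field_simp
  have hq : 3*(15*Tb^2-2*Tb^3-24*Tb+12)^3 - 33*(15*Tb^2-2*Tb^3-24*Tb+12)^2*(3*Tb^2)
      + 33*(15*Tb^2-2*Tb^3-24*Tb+12)*(3*Tb^2)^2 - 7*(3*Tb^2)^3 = 0 := by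
    linear_combination ((-24)*Tb^6 + 144*Tb^5 + 144*Tb^4 - 1980*Tb^3 + 3456*Tb^2 - 2160*Tb + 432) * hroot
  have hmul : (3*Tb^2)^3 * (3*c^3 - 33*c^2 + 33*c - 7) = 0 := by
    linear_combination hq + (3*((c*(3*Tb^2))^2 + (c*(3*Tb^2))*(15*Tb^2-2*Tb^3-24*Tb+12)
      + (15*Tb^2-2*Tb^3-24*Tb+12)^2) - 33*(3*Tb^2)*((c*(3*Tb^2)) + (15*Tb^2-2*Tb^3-24*Tb+12))
      + 33*(3*Tb^2)^2) * hu
  have qc : 3*c^3 - 33*c^2 + 33*c - 7 = 0 := by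
    rcases mul_eq_zero.mp hmul with hz | hz
    · exact absurd hz (by positivity)
    · exact hz
  have qa : 7 * (h Tb) ^ 3 - 33 * (h Tb) ^ 2 + 33 * (h Tb) - 3 = 0 := by
    rw [hhTb]
    field_simp
    linear_combination (-1) * qc
  refine ⟨?_, qa, ?_⟩
  · intro T hT hne
    have hlt := main T hT hne
    have hgpos : 0 < 1 / h T := lt_trans hc_pos hlt
    have hrw : h T = 1/(1/h T) := (one_div_one_div (h T)).symm
    rw [hrw, hhTb]
    exact one_div_lt_one_div_of_lt hc_pos hlt
  · intro z hz
    by_contra hlt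
    push_neg at hlt
    set a := h Tb
    have hQ : 0 < 7*z^2 + (7*a-33)*z + 7*a^2 - 33*a + 33 := by
      nlinarith [sq_nonneg (a-3), mul_pos (by linarith : (0:ℝ) < z - a) (by linarith : (0:ℝ) < 7*z + 14*a - 33)]
    have key : (z - a)*(7*z^2 + (7*a-33)*z + 7*a^2 - 33*a + 33) = 0 := by
      linear_combination hz - qa
    nlinarith [mul_pos (by linarith : (0:ℝ) < z - a) hQ]
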